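/- Let (θ_n) be generated by the stochastic approximation recursion θ_n = θ_{n−1} + γ_n H_n where (γ_n) is a sequence of positive reals with Σγ_n² < ∞ and Σγ_n = ∞, and suppose ‖H_n‖ ≤ B almost surely for all n and ‖θ_n − θ*‖ → 0 almost surely for some θ* ∈ ℝ^{d_θ}. Then for any positive probability mass functions 𝕡 on ℕ₀ with an increasing integer sequence T_p → ∞ and with E[ Σ_p 𝕡(p)^{-1}·𝕡(p)·(θ_{T_p} − θ_{T_{p−1}}) ] well-defined (e.g., Σ_p E‖θ_{T_p} − θ_{T_{p−1}}‖ < ∞), the single-term randomized estimator θ̂ = (θ_{T_P} − θ_{T_{P−1}})/𝕡(P) (with θ_{T_{−1}} := 0, P ~ 𝕡 independent of the chain) satisfies E[θ̂] = θ*. -/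

import Mathlib

open MeasureTheory Filter

/-- Unbiasedness of the single-term randomized estimator built from a converging
Markovian stochastic approximation sequence. -/
theorem stmt15 (dθ : ℕ) {Ω : Type*} [MeasurableSpace Ω]
    (μ : Measure Ω) [IsProbabilityMeasure μ]
    (γ : ℕ → ℝ) (hγpos : ∀ n, 0 < γ n)
    (hγ2 : Summable fun n => (γ n)^2) (hγ1 : ¬ Summable γ)
    (θ H : ℕ → Ω → EuclideanSpace ℝ (Fin dθ))
    (B : ℝ)
    (hrec : ∀ n ω, θ (n+1) ω = θ n ω + γ (n+1) • H (n+1) ω)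
    (hH : ∀ n, ∀ᵐ ω ∂μ, ‖H n ω‖ ≤ B)
    (θstar : EuclideanSpace ℝ (Fin dθ))
    (hconv : ∀ᵐ ω ∂μ, Tendsto (fun n => θ n ω) atTop (nhds θstar))
    (T : ℕ → ℕ) (hT : StrictMono T)
    (p : ℕ → ℝ) (hp : ∀ k, 0 < p k) (hpsum : ∑' k, p k = 1)
    (ν : Measure ℕ) [SigmaFinite ν] (hν : ∀ k, ν {k} = ENNReal.ofReal (p k))
    (hL1 : ∀ n, Integrable (θ n) μ)
    (hsumL1 : Summable fun k =>
      ∫ ω, ‖θ (T k) ω - (if k = 0 then 0 else θ (T (k-1)) ω)‖ ∂μ) :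
    Integrable (fun z : Ω × ℕ =>
        (p z.2)⁻¹ • (θ (T z.2) z.1 - (if z.2 = 0 then 0 else θ (T (z.2-1)) z.1)))
      (μ.prod ν) ∧
    (∫ z : Ω × ℕ,
        (p z.2)⁻¹ • (θ (T z.2) z.1 - (if z.2 = 0 then 0 else θ (T (z.2-1)) z.1))
        ∂(μ.prod ν)) = θstar := by
  classical
  set Δ : ℕ → Ω → EuclideanSpace ℝ (Fin dθ) :=
    fun k ω => θ (T k) ω - (if k = 0 then 0 else θ (T (k-1)) ω) with hΔdef
  have hΔint : ∀ k, Integrable (Δ k) μ := by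
    intro k
    cases k with
    | zero => simpa [hΔdef] using hL1 (T 0)
    | succ n => exact ((hL1 (T (n+1))).sub (hL1 (T n))).congr (Eventually.of_forall fun ω => by simp [hΔdef])
  have htel : ∀ n ω, ∑ k ∈ Finset.range (n+1), Δ k ω = θ (T n) ω := by
    intro n ω
    induction n with
    | zero => simp [hΔdef]
    | succ m ih =>
      rw [Finset.sum_range_succ, ih]
      simp [hΔdef]
  have hc : Summable (fun k => ∫ ω, ‖Δ k ω‖ ∂μ) := hsumL1
  have hIsum : Summable (fun k => ∫ ω, Δ k ω ∂μ) :=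
    Summable.of_norm_bounded hc (fun k => norm_integral_le_integral_norm _)
  -- dominating function
  set G : Ω → ENNReal := fun ω => ∑' k, (‖Δ k ω‖₊ : ENNReal) with hGdef
  have hGmeas : AEMeasurable G μ :=
    AEMeasurable.ennreal_tsum (fun k => (hΔint k).aestronglyMeasurable.enorm : ∀ k, AEMeasurable (fun ω => (‖Δ k ω‖₊ : ENNReal)) μ)
  have hGlt : ∫⁻ ω, G ω ∂μ < ⊤ := by
    rw [hGdef]
    rw [lintegral_tsum (show ∀ k, AEMeasurable (fun ω => (‖Δ k ω‖₊ : ENNReal)) μ from fun k => (hΔint k).aestronglyMeasurable.enorm)]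
    calc ∑' k, ∫⁻ ω, (‖Δ k ω‖₊ : ENNReal) ∂μ
        = ∑' k, ENNReal.ofReal (∫ ω, ‖Δ k ω‖ ∂μ) := by
          exact tsum_congr fun k => (ofReal_integral_norm_eq_lintegral_enorm (hΔint k)).symm
      _ = ENNReal.ofReal (∑' k, ∫ ω, ‖Δ k ω‖ ∂μ) :=
          (ENNReal.ofReal_tsum_of_nonneg
            (fun k => integral_nonneg (fun ω => norm_nonneg _)) hc).symm
      _ < ⊤ := ENNReal.ofReal_lt_top
  have hGae : ∀ᵐ ω ∂μ, G ω < ⊤ := ae_lt_top' hGmeas hGlt.ne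
  have hboundInt : Integrable (fun ω => (G ω).toReal) μ := by
    refine ⟨hGmeas.ennreal_toReal.aestronglyMeasurable, ?_⟩
    refine lt_of_le_of_lt (lintegral_mono fun ω => ?_) hGlt
    calc (‖(G ω).toReal‖₊ : ENNReal) = ENNReal.ofReal (G ω).toReal :=
          Real.enorm_eq_ofReal ENNReal.toReal_nonneg
      _ ≤ G ω := ENNReal.ofReal_toReal_le
  have hbound : ∀ n, ∀ᵐ ω ∂μ, ‖θ (T n) ω‖ ≤ (G ω).toReal := by
    intro n
    filter_upwards [hGae] with ω hω
    rw [← htel n ω]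
    have h1 : ENNReal.ofReal ‖∑ k ∈ Finset.range (n+1), Δ k ω‖ ≤ G ω := by
      calc ENNReal.ofReal ‖∑ k ∈ Finset.range (n+1), Δ k ω‖
          = (‖∑ k ∈ Finset.range (n+1), Δ k ω‖₊ : ENNReal) := ofReal_norm _
        _ ≤ ∑ k ∈ Finset.range (n+1), (‖Δ k ω‖₊ : ENNReal) := by
            exact_mod_cast nnnorm_sum_le _ _
        _ ≤ G ω := ENNReal.sum_le_tsum _
    have := ENNReal.toReal_mono hω.ne h1
    rwa [ENNReal.toReal_ofReal (norm_nonneg _)] at this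
  have hlim : ∀ᵐ ω ∂μ, Tendsto (fun n => θ (T n) ω) atTop (nhds θstar) := by
    filter_upwards [hconv] with ω hω
    exact hω.comp hT.tendsto_atTop
  have hTend : Tendsto (fun n => ∫ ω, θ (T n) ω ∂μ) atTop (nhds θstar) := by
    have := tendsto_integral_of_dominated_convergence (fun ω => (G ω).toReal)
      (fun n => (hL1 (T n)).aestronglyMeasurable) hboundInt hbound hlim
    simpa using this
  have hpartial : ∀ n, ∑ k ∈ Finset.range (n+1), (∫ ω, Δ k ω ∂μ) = ∫ ω, θ (T n) ω ∂μ := by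
    intro n
    rw [← integral_finset_sum _ fun k _ => hΔint k]
    exact integral_congr_ae (Eventually.of_forall (htel n))
  have htsum : (∑' k, ∫ ω, Δ k ω ∂μ) = θstar := by
    refine tendsto_nhds_unique ?_ hTend
    have h1 := hIsum.hasSum.tendsto_sum_nat.comp (tendsto_add_atTop_nat 1)
    simpa [Function.comp_def, hpartial] using h1
  -- now the product side
  set F : ℕ → Ω → EuclideanSpace ℝ (Fin dθ) := fun k ω => (p k)⁻¹ • Δ k ω with hFdef
  have hFint : ∀ k, Integrable (F k) μ := fun k => (hΔint k).smul ((p k)⁻¹)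
  set g : ℕ → Ω → EuclideanSpace ℝ (Fin dθ) :=
    fun k => (hFint k).aestronglyMeasurable.mk (F k) with hgdef
  have hgsm : ∀ k, StronglyMeasurable (g k) :=
    fun k => (hFint k).aestronglyMeasurable.stronglyMeasurable_mk
  have hgae : ∀ k, F k =ᵐ[μ] g k := fun k => (hFint k).aestronglyMeasurable.ae_eq_mk
  have hsm_prod : StronglyMeasurable (fun z : Ω × ℕ => g z.2 z.1) :=
    (measurable_from_prod_countable_left fun k => (hgsm k).measurable).stronglyMeasurable
  have haeeq : (fun z : Ω × ℕ => F z.2 z.1) =ᵐ[μ.prod ν] (fun z : Ω × ℕ => g z.2 z.1) := by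
    rw [Filter.EventuallyEq, ae_iff]
    have hnull : (μ.prod ν)
        (⋃ k, (toMeasurable μ {ω | F k ω ≠ g k ω}) ×ˢ ({k} : Set ℕ)) = 0 := by
      refine measure_iUnion_null fun k => ?_
      rw [Measure.prod_prod, measure_toMeasurable, ae_iff.1 (hgae k), zero_mul]
    refine measure_mono_null ?_ hnull
    rintro ⟨ω, k⟩ hz
    exact Set.mem_iUnion.2 ⟨k, Set.mk_mem_prod (subset_toMeasurable _ _ hz) rfl⟩
  have hfaesm : AEStronglyMeasurable (fun z : Ω × ℕ => F z.2 z.1) (μ.prod ν) :=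
    ⟨_, hsm_prod, haeeq⟩
  have hhk : ∀ k, (∫ ω, ‖F k ω‖ ∂μ) = (p k)⁻¹ * ∫ ω, ‖Δ k ω‖ ∂μ := by
    intro k
    rw [hFdef]
    simp only [norm_smul, Real.norm_eq_abs, abs_of_pos (inv_pos.2 (hp k))]
    exact integral_const_mul _ _
  have hInt : Integrable (fun z : Ω × ℕ => F z.2 z.1) (μ.prod ν) := by
    rw [integrable_prod_iff' hfaesm]
    refine ⟨Eventually.of_forall fun k => hFint k, ?_⟩
    refine ⟨(measurable_of_countable _).aestronglyMeasurable, ?_⟩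
    show (∫⁻ k, (‖∫ ω, ‖F k ω‖ ∂μ‖₊ : ENNReal) ∂ν) < ⊤
    rw [lintegral_countable']
    calc ∑' k, (‖∫ ω, ‖F k ω‖ ∂μ‖₊ : ENNReal) * ν {k}
        = ∑' k, ENNReal.ofReal (∫ ω, ‖Δ k ω‖ ∂μ) := by
          refine tsum_congr fun k => ?_
          rw [hν k, ← enorm_eq_nnnorm, Real.enorm_eq_ofReal (by
            rw [hhk k]
            exact mul_nonneg (inv_pos.2 (hp k)).le
              (integral_nonneg fun ω => norm_nonneg _)),
            ← ENNReal.ofReal_mul (by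
              rw [hhk k]
              exact mul_nonneg (inv_pos.2 (hp k)).le
                (integral_nonneg fun ω => norm_nonneg _)), hhk k]
          congr 1
          field_simp
          rw [mul_div_right_comm, div_self (hp k).ne', one_mul]
      _ = ENNReal.ofReal (∑' k, ∫ ω, ‖Δ k ω‖ ∂μ) :=
          (ENNReal.ofReal_tsum_of_nonneg
            (fun k => integral_nonneg fun ω => norm_nonneg _) hc).symm
      _ < ⊤ := ENNReal.ofReal_lt_top
  constructor
  · exact hInt
  · have hswap : (∫ z : Ω × ℕ, F z.2 z.1 ∂(μ.prod ν)) = ∫ k, ∫ ω, F k ω ∂μ ∂ν := by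
      rw [integral_prod _ hInt]
      exact integral_integral_swap hInt
    have hνint : Integrable (fun k => ∫ ω, F k ω ∂μ) ν := hInt.integral_prod_right
    show (∫ z : Ω × ℕ, F z.2 z.1 ∂(μ.prod ν)) = θstar
    rw [hswap, integral_countable' hνint]
    have hterm : ∀ k, (ν {k}).toReal • (∫ ω, F k ω ∂μ) = ∫ ω, Δ k ω ∂μ := by
      intro k
      rw [hν k, ENNReal.toReal_ofReal (hp k).le, hFdef, integral_smul, smul_smul,
        mul_inv_cancel₀ (hp k).ne', one_smul]
    exact (tsum_congr hterm).trans htsum
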